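/- With N_opt and D_opt as the minimizers of L(N,D) = A/N^α + B/D^β + E subject to 6ND = C, the compute-optimal loss satisfies L_opt(C) = E + (A·G^{-α} + B·G^{β})·(C/6)^{-αβ/(α+β)}, where G = (αA/(βB))^{1/(α+β)}. -/

import Mathlib

/-- The compute-optimal loss satisfies
`L_opt(C) = E + (A·G^{-α} + B·G^{β})·(C/6)^{-αβ/(α+β)}` with
`G = (αA/(βB))^{1/(α+β)}`. -/
theorem compute_optimal_loss
    (A B α β E C : ℝ) (hA : 0 < A) (hB : 0 < B) (hα : 0 < α) (hβ : 0 < β)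
    (hE : 0 ≤ E) (hC : 0 < C)
    (G : ℝ) (hG : G = (α * A / (β * B)) ^ (1 / (α + β)))
    (Nopt Dopt : ℝ)
    (hN : Nopt = (C / 6) ^ (β / (α + β)) * G)
    (hD : Dopt = (C / 6) ^ (α / (α + β)) * G⁻¹) :
    A / Nopt ^ α + B / Dopt ^ β + E =
      E + (A * G ^ (-α) + B * G ^ β) * (C / 6) ^ (-(α * β / (α + β))) := by
  have ht : (0:ℝ) < C / 6 := by positivity
  have hG0 : 0 < G := hG ▸ Real.rpow_pos_of_pos (by positivity) _
  subst hN hD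
  have h1 : A / ((C/6)^(β/(α+β)) * G)^α
      = A * G^(-α) * (C/6)^(-(α*β/(α+β))) := by
    rw [Real.mul_rpow (Real.rpow_nonneg ht.le _) hG0.le, ← Real.rpow_mul ht.le,
      Real.rpow_neg hG0.le, Real.rpow_neg ht.le,
      show β/(α+β)*α = α*β/(α+β) by ring]
    field_simp
  have h2 : B / ((C/6)^(α/(α+β)) * G⁻¹)^β
      = B * G^β * (C/6)^(-(α*β/(α+β))) := by
    rw [Real.mul_rpow (Real.rpow_nonneg ht.le _) (by positivity),
      ← Real.rpow_mul ht.le, Real.inv_rpow hG0.le, Real.rpow_neg ht.le,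
      show α/(α+β)*β = α*β/(α+β) by ring]
    field_simp
  rw [h1, h2]; ring
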